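/- arXiv:1707.06340 — 4 statements merged into one kernel-verified Lean document; each statement's English description precedes it below -/
import Mathlib

section
/- Proposition 2 (commutation of modulo with finite differences): for every λ > 0, every N ∈ ℕ, every sequence a : ℤ → ℝ, and every k ∈ ℤ, M_λ((Δ^N a)_k) = M_λ((Δ^N (M_λ ∘ a))_k), where M_λ ∘ a denotes the sequence k ↦ M_λ(a_k). -/
/-- Centered modulo map `M_λ(t) = 2λ(⟨t/(2λ) + 1/2⟩ - 1/2)`. -/
noncomputable def Mlam (l t : ℝ) : ℝ := 2 * l * (Int.fract (t / (2 * l) + 1 / 2) - 1 / 2)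

/-- First-order finite difference of a sequence. -/
def fdiff (a : ℤ → ℝ) : ℤ → ℝ := fun k => a (k + 1) - a k

lemma Mlam_add_int_mul (l t : ℝ) (hl : 0 < l) (m : ℤ) :
    Mlam l (t + 2 * l * m) = Mlam l t := by
  unfold Mlam
  have h2l : (2 : ℝ) * l ≠ 0 := by positivity
  have : (t + 2 * l * m) / (2 * l) + 1 / 2 = (t / (2 * l) + 1 / 2) + m := by
    field_simp; ring
  rw [this, Int.fract_add_intCast]

lemma Mlam_sub (l t : ℝ) (hl : 0 < l) : ∃ m : ℤ, Mlam l t = t + 2 * l * m := by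
  refine ⟨-⌊t / (2 * l) + 1 / 2⌋, ?_⟩
  unfold Mlam
  rw [Int.fract]
  have h2l : (2 : ℝ) * l ≠ 0 := by positivity
  push_cast
  field_simp
  ring

/-- modulo commutes with finite differences under `M_λ`. -/
theorem Mlam_comm_fdiff (l : ℝ) (hl : 0 < l) (N : ℕ) (a : ℤ → ℝ) (k : ℤ) :
    Mlam l ((fdiff^[N] a) k) = Mlam l ((fdiff^[N] (fun j => Mlam l (a j))) k) := by
  -- there exists c : ℤ → ℤ with Mlam l (a j) = a j + 2l c j
  choose c hc using fun j => Mlam_sub l (a j) hl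
  have key : ∀ (n : ℕ), ∃ d : ℤ → ℤ,
      ∀ j, (fdiff^[n] (fun j => Mlam l (a j))) j = (fdiff^[n] a) j + 2 * l * d j := by
    intro n
    induction n with
    | zero => exact ⟨c, by simpa using hc⟩
    | succ n ih =>
      obtain ⟨d, hd⟩ := ih
      refine ⟨fun j => d (j + 1) - d j, fun j => ?_⟩
      rw [Function.iterate_succ_apply', Function.iterate_succ_apply']
      simp only [fdiff, hd]
      push_cast
      ring
  obtain ⟨d, hd⟩ := key N
  rw [hd k, Mlam_add_int_mul l _ hl]
end

section
/- Let N ≥ 1, let g : ℝ → ℝ be N-times continuously differentiable, let B ≥ 0 satisfy |g(t)| ≤ B for all t ∈ ℝ and |g^{(N)}(t)| ≤ π^N · B for all t ∈ ℝ (the Bernstein bound for π-bandlimited functions), let T > 0, and let γ_k = g(kT). Then for every k ∈ ℤ, |(Δ^N γ)_k| ≤ (Tπe)^N · B. -/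
private lemma iterDeriv_add {n : ℕ} {f g : ℝ → ℝ} (hf : ContDiff ℝ n f) (hg : ContDiff ℝ n g)
    (x : ℝ) :
    iteratedDeriv n (fun y => f y + g y) x = iteratedDeriv n f x + iteratedDeriv n g x := by
  simp only [iteratedDeriv_eq_iteratedFDeriv]
  rw [show (fun y => f y + g y) = f + g from rfl, iteratedFDeriv_add_apply hf.contDiffAt hg.contDiffAt]
  rfl

/-- continuous difference operator -/
private def cdiff (T : ℝ) (f : ℝ → ℝ) : ℝ → ℝ := fun x => f (x + T) - f x

private lemma cdiff_contDiff {n : ℕ} {T : ℝ} {f : ℝ → ℝ} (hf : ContDiff ℝ n f) :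
    ContDiff ℝ n (cdiff T f) :=
  (hf.comp (contDiff_id.add contDiff_const)).sub hf

private lemma iteratedDeriv_cdiff {n : ℕ} {T : ℝ} {f : ℝ → ℝ} (hf : ContDiff ℝ n f) (t : ℝ) :
    iteratedDeriv n (cdiff T f) t = iteratedDeriv n f (t + T) - iteratedDeriv n f t := by
  have h1 : ContDiff ℝ n (fun x => f (x + T)) := hf.comp (contDiff_id.add contDiff_const)
  have h2 : ContDiff ℝ n (fun x => -(f x)) := hf.neg
  have : cdiff T f = fun x => (fun y => f (y + T)) x + (fun y => -(f y)) x := by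
    funext x; simp [cdiff, sub_eq_add_neg]
  rw [this, iterDeriv_add h1 h2, iteratedDeriv_comp_add_const, iteratedDeriv_fun_neg,
    sub_eq_add_neg]

/-- key bound: |(cdiff T)^[n] f x| ≤ T^n * C when |f^(n)| ≤ C. -/
private lemma key (T : ℝ) (hT : 0 < T) :
    ∀ (n : ℕ) (f : ℝ → ℝ), ContDiff ℝ n f → ∀ C : ℝ,
      (∀ t, |iteratedDeriv n f t| ≤ C) → ∀ x, |(cdiff T)^[n] f x| ≤ T ^ n * C := by
  intro n
  induction n with
  | zero =>
    intro f _ C hC x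
    simpa using hC x
  | succ n IH =>
    intro f hf C hC x
    have hf' : ContDiff ℝ n (cdiff T f) :=
      cdiff_contDiff (hf.of_le (by exact_mod_cast Nat.le_succ n))
    have hdn : ∀ t, |iteratedDeriv n (cdiff T f) t| ≤ C * T := by
      intro t
      rw [iteratedDeriv_cdiff (hf.of_le (by exact_mod_cast Nat.le_succ n))]
      have hdiff : ∀ y ∈ (Set.univ : Set ℝ), HasDerivWithinAt (iteratedDeriv n f)
          (iteratedDeriv (n + 1) f y) Set.univ y := by
        intro y _
        have : DifferentiableAt ℝ (iteratedDeriv n f) y :=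
          (hf.differentiable_iteratedDeriv n
            (by exact_mod_cast Nat.lt_succ_self n)).differentiableAt
        rw [iteratedDeriv_succ]
        exact this.hasDerivAt.deriv ▸ this.hasDerivAt.hasDerivWithinAt
      have hb : ∀ y ∈ (Set.univ : Set ℝ), ‖iteratedDeriv (n + 1) f y‖ ≤ C := by
        intro y _; simpa [Real.norm_eq_abs] using hC y
      have := convex_univ.norm_image_sub_le_of_norm_hasDerivWithin_le hdiff hb
        (Set.mem_univ t) (Set.mem_univ (t + T))
      simpa [Real.norm_eq_abs, abs_of_pos hT] using this
    have := IH (cdiff T f) hf' (C * T) hdn x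
    calc |(cdiff T)^[n + 1] f x| = |(cdiff T)^[n] (cdiff T f) x| := by
          rw [Function.iterate_succ_apply]
      _ ≤ T ^ n * (C * T) := this
      _ = T ^ (n + 1) * C := by ring

private lemma fdiff_iter_eq {T : ℝ} : ∀ (n : ℕ) (g : ℝ → ℝ) (γ : ℤ → ℝ),
    (∀ k : ℤ, γ k = g (k * T)) → ∀ k : ℤ, (fdiff^[n] γ) k = ((cdiff T)^[n] g) (k * T) := by
  intro n
  induction n with
  | zero => intro g γ h k; simpa using h k
  | succ n IH =>
    intro g γ h k
    rw [Function.iterate_succ_apply, Function.iterate_succ_apply]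
    refine IH (cdiff T g) (fdiff γ) (fun k => ?_) k
    simp only [fdiff, cdiff, h]
    push_cast
    ring_nf

/-- with the Bernstein bound, `|(Δ^N γ)_k| ≤ (Tπe)ᴺ B`. -/
theorem fdiff_iter_samples_bernstein_bound (N : ℕ) (hN : 1 ≤ N) (g : ℝ → ℝ)
    (hg : ContDiff ℝ N g) (B : ℝ) (hB : 0 ≤ B)
    (hbound : ∀ t : ℝ, |g t| ≤ B)
    (hderiv : ∀ t : ℝ, |iteratedDeriv N g t| ≤ Real.pi ^ N * B)
    (T : ℝ) (hT : 0 < T) (γ : ℤ → ℝ) (hγ : ∀ k : ℤ, γ k = g (k * T)) :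
    ∀ k : ℤ, |(fdiff^[N] γ) k| ≤ (T * Real.pi * Real.exp 1) ^ N * B := by
  intro k
  rw [fdiff_iter_eq N g γ hγ k]
  have h1 := key T hT N g hg (Real.pi ^ N * B) hderiv (k * T)
  refine h1.trans ?_
  have he : (1 : ℝ) ≤ Real.exp 1 ^ N := one_le_pow₀ (by linarith [Real.exp_one_gt_d9])
  have hTp : (0:ℝ) ≤ T ^ N * Real.pi ^ N * B := by positivity
  calc T ^ N * (Real.pi ^ N * B) = (T ^ N * Real.pi ^ N * B) * 1 := by ring
    _ ≤ (T ^ N * Real.pi ^ N * B) * Real.exp 1 ^ N := by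
        exact mul_le_mul_of_nonneg_left he hTp
    _ = (T * Real.pi * Real.exp 1) ^ N * B := by rw [mul_pow, mul_pow]; ring
end

section
/- Sequence-level uniqueness from modulo samples: let λ > 0 and N ≥ 1, and let γ, η : ℤ → ℝ be sequences such that (i) M_λ(γ_k) = M_λ(η_k) for all k ∈ ℤ, (ii) −λ ≤ (Δ^N γ)_k < λ and −λ ≤ (Δ^N η)_k < λ for all k ∈ ℤ, and (iii) the difference sequence γ − η is bounded. Then there exists a single integer m such that η_k = γ_k + 2λ·m for all k ∈ ℤ; that is, the samples are determined by their modulo samples up to an additive constant multiple of 2λ. -/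
/-- Integer finite difference. -/
def fdiffZ (a : ℤ → ℤ) : ℤ → ℤ := fun k => a (k + 1) - a k

lemma fdiff_iter_sub (N : ℕ) (a b : ℤ → ℝ) (k : ℤ) :
    fdiff^[N] (fun j => a j - b j) k = fdiff^[N] a k - fdiff^[N] b k := by
  induction N generalizing k with
  | zero => simp
  | succ n ih =>
    rw [Function.iterate_succ_apply', Function.iterate_succ_apply',
      Function.iterate_succ_apply']
    simp only [fdiff, ih]
    ring

lemma fdiff_iter_cast (l : ℝ) (N : ℕ) (a : ℤ → ℤ) (k : ℤ) :
    fdiff^[N] (fun j => 2 * l * ((a j : ℤ) : ℝ)) k = 2 * l * ((fdiffZ^[N] a k : ℤ) : ℝ) := by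
  induction N generalizing k with
  | zero => simp
  | succ n ih =>
    rw [Function.iterate_succ_apply', Function.iterate_succ_apply']
    simp only [fdiff, fdiffZ, ih]
    push_cast
    ring

lemma const_diff (a : ℤ → ℤ) (c : ℤ) (h : ∀ k, fdiffZ a k = c) :
    ∀ k : ℤ, a k = a 0 + c * k := by
  intro k
  induction k using Int.induction_on with
  | zero => simp
  | succ n ih =>
    have h1 : a ((n : ℤ) + 1) = a n + c := by
      have := h n
      simp only [fdiffZ] at this
      omega
    rw [h1, ih]; ring
  | pred n ih =>
    have h1 : a (-(n : ℤ) - 1) = a (-(n : ℤ)) - c := by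
      have := h (-(n : ℤ) - 1)
      simp only [fdiffZ] at this
      have e : -(n : ℤ) - 1 + 1 = -(n : ℤ) := by ring
      rw [e] at this
      omega
    rw [h1, ih]; ring

lemma bounded_zero_diff (a : ℤ → ℤ) (Bm : ℤ) (hB : ∀ k, |a k| ≤ Bm) (c : ℤ)
    (h : ∀ k, fdiffZ a k = c) : c = 0 := by
  by_contra hc
  have h1 := abs_le.mp (hB (2 * Bm + 1))
  have h2 := abs_le.mp (hB 0)
  have hBm : 0 ≤ Bm := le_trans (abs_nonneg _) (hB 0)
  have hval := const_diff a c h (2 * Bm + 1)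
  rw [hval] at h1
  rcases lt_or_gt_of_ne hc with h' | h'
  · have hc1 : c ≤ -1 := by omega
    have := mul_le_mul_of_nonneg_right hc1 (by omega : (0:ℤ) ≤ 2 * Bm + 1)
    linarith [h1.1, h2.2]
  · have hc1 : 1 ≤ c := by omega
    have := mul_le_mul_of_nonneg_right hc1 (by omega : (0:ℤ) ≤ 2 * Bm + 1)
    linarith [h1.2, h2.1]

lemma bounded_iter_zero (N : ℕ) (hN : 1 ≤ N) (a : ℤ → ℤ) (Bm : ℤ)
    (hB : ∀ k, |a k| ≤ Bm) (h : ∀ k, fdiffZ^[N] a k = 0) : ∀ k, a k = a 0 := by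
  induction N generalizing a Bm with
  | zero => omega
  | succ n ih =>
    rcases Nat.eq_zero_or_pos n with rfl | hn
    · intro k
      have hd : ∀ j, fdiffZ a j = 0 := by
        intro j; simpa using h j
      have := const_diff a 0 hd k
      simpa using this
    · have h' : ∀ k, fdiffZ^[n] (fdiffZ a) k = 0 := by
        intro k
        have := h k
        rwa [Function.iterate_succ_apply] at this
      have hB' : ∀ k, |fdiffZ a k| ≤ 2 * Bm := by
        intro k
        have e1 := abs_le.mp (hB (k + 1))
        have e2 := abs_le.mp (hB k)
        rw [abs_le]
        constructor <;> simp only [fdiffZ] <;> omega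
      have hconst := ih hn (fdiffZ a) (2 * Bm) hB' h'
      have hc0 : fdiffZ a 0 = 0 :=
        bounded_zero_diff a Bm hB (fdiffZ a 0) hconst
      have hd : ∀ j, fdiffZ a j = 0 := fun j => (hconst j).trans hc0
      intro k
      have := const_diff a 0 hd k
      simpa using this

/-- sequence-level uniqueness from modulo samples. -/
theorem uniqueness_from_modulo_samples (l : ℝ) (hl : 0 < l) (N : ℕ) (hN : 1 ≤ N)
    (γ η : ℤ → ℝ)
    (hmod : ∀ k : ℤ, Mlam l (γ k) = Mlam l (η k))
    (hγ : ∀ k : ℤ, -l ≤ (fdiff^[N] γ) k ∧ (fdiff^[N] γ) k < l)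
    (hη : ∀ k : ℤ, -l ≤ (fdiff^[N] η) k ∧ (fdiff^[N] η) k < l)
    (hbdd : ∃ B : ℝ, ∀ k : ℤ, |γ k - η k| ≤ B) :
    ∃ m : ℤ, ∀ k : ℤ, η k = γ k + 2 * l * m := by
  obtain ⟨B, hB⟩ := hbdd
  have hl2 : (0 : ℝ) < 2 * l := by linarith
  have key : ∀ k, ∃ z : ℤ, η k = γ k + 2 * l * z := by
    intro k
    have h := hmod k
    unfold Mlam at h
    have h' := mul_left_cancel₀ (ne_of_gt hl2) h
    have hfr : Int.fract (η k / (2 * l) + 1 / 2) = Int.fract (γ k / (2 * l) + 1 / 2) := by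
      linarith
    obtain ⟨z, hz⟩ := Int.fract_eq_fract.mp hfr
    refine ⟨z, ?_⟩
    have h2 : η k / (2 * l) - γ k / (2 * l) = (z : ℝ) := by linarith
    have h3 : η k - γ k = 2 * l * z := by
      field_simp at h2
      linarith
    linarith
  choose m hm using key
  set Bm : ℤ := ⌈B / (2 * l)⌉ with hBmdef
  have hmb : ∀ k, |m k| ≤ Bm := by
    intro k
    have e : γ k - η k = -(2 * l * ((m k : ℤ) : ℝ)) := by rw [hm k]; ring
    have hb := hB k
    rw [e, abs_neg, abs_mul, abs_of_pos hl2] at hb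
    have h1 : |((m k : ℤ) : ℝ)| ≤ B / (2 * l) := by
      rw [le_div_iff₀ hl2]
      linarith
    have h2 : (|m k| : ℝ) ≤ (Bm : ℝ) := by
      push_cast
      exact h1.trans (Int.le_ceil _)
    exact_mod_cast h2
  have hz0 : ∀ k, fdiffZ^[N] m k = 0 := by
    intro k
    have e2 : (fun j => η j - γ j) = fun j => 2 * l * ((m j : ℤ) : ℝ) := by
      funext j; rw [hm j]; ring
    have e3 : fdiff^[N] η k - fdiff^[N] γ k = 2 * l * ((fdiffZ^[N] m k : ℤ) : ℝ) := by
      rw [← fdiff_iter_sub N η γ k, e2, fdiff_iter_cast]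
    obtain ⟨hγ1, hγ2⟩ := hγ k
    obtain ⟨hη1, hη2⟩ := hη k
    have habs : |2 * l * ((fdiffZ^[N] m k : ℤ) : ℝ)| < 2 * l := by
      rw [abs_lt]
      constructor <;> · rw [← e3]; linarith
    rw [abs_mul, abs_of_pos hl2] at habs
    have h4 : |((fdiffZ^[N] m k : ℤ) : ℝ)| < 1 := by
      by_contra hcon
      push_neg at hcon
      nlinarith
    have h5 : |fdiffZ^[N] m k| < 1 := by exact_mod_cast h4
    rw [abs_lt] at h5
    omega
  have hconst := bounded_iter_zero N hN m Bm hmb hz0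
  refine ⟨m 0, fun k => ?_⟩
  rw [hm k, hconst k]
end

section
/- Unlimited sampling theorem (identifiability form at the sample level): let λ, β, T > 0 and N ≥ 1 with (Tπe)^N · β < λ. Let g, h : ℝ → ℝ be N-times continuously differentiable functions satisfying, for all t ∈ ℝ, |g(t)| ≤ β, |h(t)| ≤ β, |g^{(N)}(t)| ≤ π^N·β, and |h^{(N)}(t)| ≤ π^N·β (the Bernstein bound satisfied by π-bandlimited functions with sup-norm at most β). If the modulo samples agree, i.e., M_λ(g(kT)) = M_λ(h(kT)) for every k ∈ ℤ, then there exists a single integer m such that h(kT) = g(kT) + 2λ·m for every k ∈ ℤ; that is, the sample sequence of g is determined by its modulo samples up to an additive multiple of 2λ. -/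
/-- Finite difference operator on functions on ℝ. -/
def Dop (T : ℝ) (f : ℝ → ℝ) : ℝ → ℝ := fun t => f (t + T) - f t

lemma contDiff_Dop {n : ℕ} (T : ℝ) {f : ℝ → ℝ} (hf : ContDiff ℝ n f) :
    ContDiff ℝ n (Dop T f) :=
  (hf.comp (contDiff_id.add contDiff_const)).sub hf

lemma iteratedDeriv_Dop {n : ℕ} (T : ℝ) {f : ℝ → ℝ} (hf : ContDiff ℝ n f) (t : ℝ) :
    iteratedDeriv n (Dop T f) t = iteratedDeriv n f (t + T) - iteratedDeriv n f t := by
  have h1 : Dop T f = (fun z => f (z + T)) - f := rfl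
  have h2 : ContDiff ℝ n (fun z : ℝ => f (z + T)) :=
    hf.comp (contDiff_id.add contDiff_const)
  rw [h1, ← iteratedDerivWithin_univ, iteratedDerivWithin_sub (Set.mem_univ t)
    uniqueDiffOn_univ h2.contDiffAt.contDiffWithinAt hf.contDiffAt.contDiffWithinAt, iteratedDerivWithin_univ,
    iteratedDerivWithin_univ, iteratedDeriv_comp_add_const n f T]

/-- MVT bound for a single finite difference. -/
lemma Dop_abs_le {T : ℝ} (hT : 0 ≤ T) {f : ℝ → ℝ} (hf : Differentiable ℝ f)
    {C : ℝ} (hC : ∀ t, |deriv f t| ≤ C) (t : ℝ) : |Dop T f t| ≤ T * C := by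
  have := Convex.norm_image_sub_le_of_norm_deriv_le (s := Set.univ) (f := f) (C := C)
    (fun x _ => hf x) (fun x _ => hC x) convex_univ (Set.mem_univ t) (Set.mem_univ (t + T))
  simp only [Real.norm_eq_abs, add_sub_cancel_left, abs_of_nonneg hT] at this
  calc |Dop T f t| ≤ C * T := this
  _ = T * C := mul_comm _ _

/-- Iterated finite differences are bounded by `T^n` times a bound on the `n`-th derivative. -/
lemma Dop_iterate_bound {T : ℝ} (hT : 0 ≤ T) :
    ∀ (n : ℕ) (f : ℝ → ℝ), ContDiff ℝ n f → ∀ C : ℝ, (∀ t, |iteratedDeriv n f t| ≤ C) →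
      ∀ t, |(Dop T)^[n] f t| ≤ T ^ n * C := by
  intro n
  induction n with
  | zero => intro f _ C hC t; simpa using hC t
  | succ n ih =>
    intro f hf C hC t
    have hf' : ContDiff ℝ n f := hf.of_le (by exact_mod_cast Nat.le_succ n)
    have hdiff : Differentiable ℝ (iteratedDeriv n f) :=
      hf.differentiable_iteratedDeriv n (by exact_mod_cast Nat.lt_succ_self n)
    have hbound : ∀ s, |iteratedDeriv n (Dop T f) s| ≤ T * C := by
      intro s
      rw [iteratedDeriv_Dop T hf']
      have : ∀ u, |deriv (iteratedDeriv n f) u| ≤ C := by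
        intro u; rw [← iteratedDeriv_succ]; exact hC u
      have := Dop_abs_le hT hdiff this s
      simpa [Dop] using this
    have := ih (Dop T f) (contDiff_Dop T hf') (T * C) hbound t
    rw [Function.iterate_succ_apply]
    calc |(Dop T)^[n] (Dop T f) t| ≤ T ^ n * (T * C) := this
    _ = T ^ (n + 1) * C := by ring

lemma fdiff_samples (T : ℝ) (f : ℝ → ℝ) :
    ∀ n : ℕ, fdiff^[n] (fun k : ℤ => f (k * T)) = fun k : ℤ => (Dop T)^[n] f (k * T) := by
  intro n
  induction n generalizing f with
  | zero => rfl
  | succ n ih =>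
    rw [Function.iterate_succ_apply]
    have h1 : fdiff (fun k : ℤ => f (k * T)) = fun k : ℤ => (Dop T f) (k * T) := by
      funext k
      simp only [fdiff, Dop]
      congr 1
      push_cast
      ring
    rw [h1, ih (Dop T f)]
    funext k
    rw [← Function.iterate_succ_apply]

lemma fdiff_const_mul (c : ℝ) (a : ℤ → ℝ) :
    ∀ n : ℕ, fdiff^[n] (fun k => c * a k) = fun k => c * fdiff^[n] a k := by
  intro n
  induction n generalizing a with
  | zero => rfl
  | succ n ih =>
    rw [Function.iterate_succ_apply, Function.iterate_succ_apply]
    have h1 : fdiff (fun k => c * a k) = fun k => c * fdiff a k := by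
      funext k; simp [fdiff]; ring
    rw [h1, ih (fdiff a)]

lemma fdiff_cast (a : ℤ → ℤ) :
    ∀ n : ℕ, fdiff^[n] (fun k => (a k : ℝ)) = fun k => ((fdiffZ^[n] a k : ℤ) : ℝ) := by
  intro n
  induction n generalizing a with
  | zero => rfl
  | succ n ih =>
    rw [Function.iterate_succ_apply, Function.iterate_succ_apply]
    have h1 : fdiff (fun k => (a k : ℝ)) = fun k => ((fdiffZ a k : ℤ) : ℝ) := by
      funext k; simp [fdiff, fdiffZ]
    rw [h1, ih (fdiffZ a)]

/-- A bounded sequence with vanishing `n`-th finite difference is constant. -/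
lemma bounded_fdiff_zero_const :
    ∀ (n : ℕ) (a : ℤ → ℝ) (C : ℝ), (∀ k, |a k| ≤ C) → (∀ k, fdiff^[n] a k = 0) →
      ∀ k, a k = a 0 := by
  intro n
  induction n with
  | zero =>
    intro a C _ h0 k
    have h1 := h0 k
    have h2 := h0 0
    simp only [Function.iterate_zero, id] at h1 h2
    rw [h1, h2]
  | succ n ih =>
    intro a C hC h0 k
    have hb : ∀ j, |fdiff a j| ≤ C + C := by
      intro j
      calc |fdiff a j| ≤ |a (j + 1)| + |a j| := abs_sub _ _
      _ ≤ C + C := add_le_add (hC _) (hC _)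
    have h0' : ∀ j, fdiff^[n] (fdiff a) j = 0 := by
      intro j
      have := h0 j
      rwa [Function.iterate_succ_apply] at this
    have hconst := ih (fdiff a) (C + C) hb h0'
    set c := fdiff a 0 with hc
    have hlin : ∀ j : ℤ, a j = a 0 + j * c := by
      intro j
      induction j using Int.induction_on with
      | zero => simp
      | succ i hi =>
        have : fdiff a i = c := hconst i
        have h2 : a (i + 1) = a i + c := by
          simp only [fdiff] at this; linarith
        rw [h2, hi]; push_cast; ring
      | pred i hi =>
        have : fdiff a (-(i : ℤ) - 1) = c := hconst _
        have h2 : a (-(i : ℤ) - 1) = a (-(i : ℤ)) - c := by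
          simp only [fdiff] at this
          have h3 : (-(i : ℤ) - 1) + 1 = -(i : ℤ) := by ring
          rw [h3] at this; linarith
        rw [h2, hi]; push_cast; ring
    have hc0 : c = 0 := by
      by_contra hne
      have hpos : 0 < |c| := abs_pos.mpr hne
      obtain ⟨M, hM⟩ := exists_nat_gt ((C + |a 0|) / |c|)
      have hM' : (C + |a 0|) < M * |c| := by
        rw [div_lt_iff₀ hpos] at hM; linarith
      have h1 : |a (M : ℤ)| ≤ C := hC _
      have h2 : a (M : ℤ) = a 0 + M * c := hlin M
      have h3 : (M : ℝ) * |c| = |(M : ℝ) * c| := by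
        rw [abs_mul, abs_of_nonneg (by positivity : (0:ℝ) ≤ (M:ℝ))]
      have h4 : |(M : ℝ) * c| ≤ |a (M : ℤ)| + |a 0| := by
        have : (M : ℝ) * c = a (M : ℤ) - a 0 := by
          rw [h2]; push_cast; ring
        rw [this]; exact abs_sub _ _
      have : (M : ℝ) * |c| ≤ C + |a 0| := by
        rw [h3]; exact h4.trans (add_le_add_left h1 _)
      linarith
    rw [hlin k, hc0]; ring

/-- unlimited sampling theorem, identifiability form at the sample level. -/
theorem unlimited_sampling_identifiability (l β T : ℝ) (hl : 0 < l) (hβ : 0 < β)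
    (hT : 0 < T) (N : ℕ) (hN : 1 ≤ N)
    (hover : (T * Real.pi * Real.exp 1) ^ N * β < l)
    (g h : ℝ → ℝ) (hg : ContDiff ℝ N g) (hh : ContDiff ℝ N h)
    (hgB : ∀ t : ℝ, |g t| ≤ β) (hhB : ∀ t : ℝ, |h t| ≤ β)
    (hgD : ∀ t : ℝ, |iteratedDeriv N g t| ≤ Real.pi ^ N * β)
    (hhD : ∀ t : ℝ, |iteratedDeriv N h t| ≤ Real.pi ^ N * β)
    (hmod : ∀ k : ℤ, Mlam l (g (k * T)) = Mlam l (h (k * T))) :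
    ∃ m : ℤ, ∀ k : ℤ, h (k * T) = g (k * T) + 2 * l * m := by
  have hl2 : (0:ℝ) < 2 * l := by linarith
  -- Step 1: extract integer sequence m with h(kT) = g(kT) + 2l * m k
  have hexists : ∀ k : ℤ, ∃ z : ℤ, h (k * T) = g (k * T) + 2 * l * z := by
    intro k
    have hmk := hmod k
    unfold Mlam at hmk
    have hfr : Int.fract (g (k * T) / (2 * l) + 1 / 2) =
        Int.fract (h (k * T) / (2 * l) + 1 / 2) := by
      have := mul_left_cancel₀ (ne_of_gt hl2) hmk
      linarith
    rw [Int.fract_eq_fract] at hfr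
    obtain ⟨z, hz⟩ := hfr
    refine ⟨-z, ?_⟩
    have : g (k * T) / (2 * l) - h (k * T) / (2 * l) = (z : ℝ) := by linarith
    have h2 : g (k * T) - h (k * T) = 2 * l * z := by
      field_simp at this
      linarith
    push_cast
    linarith
  choose m hm using hexists
  -- Step 2: the N-th finite difference of the sample difference is small
  set f : ℝ → ℝ := fun t => h t - g t with hf
  have hfc : ContDiff ℝ N f := hh.sub hg
  have hfD : ∀ t, |iteratedDeriv N f t| ≤ 2 * (Real.pi ^ N * β) := by
    intro t
    have hsub : iteratedDeriv N f t = iteratedDeriv N h t - iteratedDeriv N g t := by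
      have h1 : f = h - g := rfl
      rw [h1, ← iteratedDerivWithin_univ, iteratedDerivWithin_sub (Set.mem_univ t)
        uniqueDiffOn_univ hh.contDiffAt.contDiffWithinAt hg.contDiffAt.contDiffWithinAt, iteratedDerivWithin_univ,
        iteratedDerivWithin_univ]
    rw [hsub]
    calc |iteratedDeriv N h t - iteratedDeriv N g t|
        ≤ |iteratedDeriv N h t| + |iteratedDeriv N g t| := abs_sub _ _
      _ ≤ 2 * (Real.pi ^ N * β) := by have := hhD t; have := hgD t; linarith
  have hDbound : ∀ t, |(Dop T)^[N] f t| ≤ T ^ N * (2 * (Real.pi ^ N * β)) :=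
    Dop_iterate_bound hT.le N f hfc _ hfD
  -- samples of f are 2l * m
  have hsamp : (fun k : ℤ => f (k * T)) = fun k => 2 * l * ((m k : ℤ) : ℝ) := by
    funext k
    simp only [hf]
    rw [hm k]; ring
  have hkey : ∀ k : ℤ, fdiff^[N] (fun k : ℤ => f (k * T)) k
      = 2 * l * ((fdiffZ^[N] m k : ℤ) : ℝ) := by
    intro k
    rw [hsamp, fdiff_const_mul (2 * l) (fun k => ((m k : ℤ) : ℝ)) N]
    rw [fdiff_cast m N]
  -- Step 3: show the N-th finite difference of m vanishes
  have hsmall : T ^ N * (2 * (Real.pi ^ N * β)) < 2 * l := by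
    have hπ : (0:ℝ) < Real.pi := Real.pi_pos
    have he : (1:ℝ) < Real.exp 1 := by
      have := Real.exp_one_gt_d9; linarith
    have h1 : (T * Real.pi) ^ N ≤ (T * Real.pi * Real.exp 1) ^ N := by
      apply pow_le_pow_left₀ (by positivity)
      nlinarith [mul_pos hT hπ]
    have h2 : (T * Real.pi) ^ N * β < l := by
      calc (T * Real.pi) ^ N * β ≤ (T * Real.pi * Real.exp 1) ^ N * β :=
        mul_le_mul_of_nonneg_right h1 hβ.le
      _ < l := hover
    have h3 : T ^ N * (2 * (Real.pi ^ N * β)) = 2 * ((T * Real.pi) ^ N * β) := by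
      rw [mul_pow]; ring
    linarith
  have hfdZ : ∀ k : ℤ, fdiffZ^[N] m k = 0 := by
    intro k
    have h1 : |2 * l * ((fdiffZ^[N] m k : ℤ) : ℝ)| < 2 * l := by
      rw [← hkey k]
      calc |fdiff^[N] (fun k : ℤ => f (k * T)) k| ≤ T ^ N * (2 * (Real.pi ^ N * β)) := by
            rw [fdiff_samples T f N]; exact hDbound _
        _ < 2 * l := hsmall
    rw [abs_mul, abs_of_pos hl2] at h1
    have h2 : |((fdiffZ^[N] m k : ℤ) : ℝ)| < 1 := by
      by_contra hcon
      push_neg at hcon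
      nlinarith
    have h3 : |fdiffZ^[N] m k| < 1 := by exact_mod_cast (by rwa [← Int.cast_abs] at h2 : ((|fdiffZ^[N] m k| : ℤ) : ℝ) < 1)
    exact Int.abs_lt_one_iff.mp h3
  -- Step 4: m is bounded, hence constant
  have hmb : ∀ k : ℤ, |((m k : ℤ) : ℝ)| ≤ β / l := by
    intro k
    have h1 : 2 * l * ((m k : ℤ) : ℝ) = h (k * T) - g (k * T) := by
      rw [hm k]; ring
    have h2 : |2 * l * ((m k : ℤ) : ℝ)| ≤ 2 * β := by
      rw [h1]
      calc |h (k * T) - g (k * T)| ≤ |h (k * T)| + |g (k * T)| := abs_sub _ _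
        _ ≤ 2 * β := by have := hhB (k * T); have := hgB (k * T); linarith
    rw [abs_mul, abs_of_pos hl2] at h2
    rw [le_div_iff₀ hl]
    nlinarith
  have hfd0 : ∀ k : ℤ, fdiff^[N] (fun k => ((m k : ℤ) : ℝ)) k = 0 := by
    intro k
    rw [fdiff_cast m N]
    simp [hfdZ k]
  have hconst := bounded_fdiff_zero_const N (fun k => ((m k : ℤ) : ℝ)) (β / l) hmb hfd0
  refine ⟨m 0, fun k => ?_⟩
  have : ((m k : ℤ) : ℝ) = ((m 0 : ℤ) : ℝ) := hconst k
  have hmk : m k = m 0 := by exact_mod_cast this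
  rw [hm k, hmk]
end
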